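/- Let T be a random vector in R^k and S a random vector in R^d with finite second moments and E[S S'] invertible. Then E[T T'] = E[T S'] (E[S S'])^{-1} E[S T'] holds (as matrices) if and only if T = E[T S'] (E[S S'])^{-1} S almost surely. -/

import Mathlib

open MeasureTheory Matrix

private lemma l2_mul_integrable {Ω : Type*} [MeasurableSpace Ω] {μ : Measure Ω}
    {f g : Ω → ℝ} (hf : MemLp f 2 μ) (hg : MemLp g 2 μ) :
    Integrable (fun ω => f ω * g ω) μ := by
  have h : MemLp (f • g) 1 μ :=
    haveI : ENNReal.HolderTriple 2 2 1 := ⟨by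
      norm_num
      rw [ENNReal.inv_two_add_inv_two]⟩
    hg.smul (r := 1) hf
  rw [memLp_one_iff_integrable] at h
  exact h

theorem cramer_rao_matrix_eq_iff
    {Ω : Type*} [MeasurableSpace Ω] (μ : Measure Ω) [IsProbabilityMeasure μ]
    {k d : ℕ} (T : Ω → Fin k → ℝ) (S : Ω → Fin d → ℝ)
    (hT : ∀ i, MemLp (fun ω => T ω i) 2 μ)
    (hS : ∀ j, MemLp (fun ω => S ω j) 2 μ)
    (ESS : Matrix (Fin d) (Fin d) ℝ) (hESS : ∀ i j, ESS i j = ∫ ω, S ω i * S ω j ∂μ)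
    (ETS : Matrix (Fin k) (Fin d) ℝ) (hETS : ∀ i j, ETS i j = ∫ ω, T ω i * S ω j ∂μ)
    (ETT : Matrix (Fin k) (Fin k) ℝ) (hETT : ∀ i j, ETT i j = ∫ ω, T ω i * T ω j ∂μ)
    (hinv : IsUnit ESS) :
    ETT = ETS * ESS⁻¹ * ETSᵀ ↔ ∀ᵐ ω ∂μ, T ω = (ETS * ESS⁻¹).mulVec (S ω) := by
  classical
  set B : Matrix (Fin k) (Fin d) ℝ := ETS * ESS⁻¹ with hB
  have hdet : IsUnit ESS.det := (Matrix.isUnit_iff_isUnit_det ESS).mp hinv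
  have hBESS : B * ESS = ETS := by
    rw [hB, Matrix.mul_assoc, Matrix.nonsing_inv_mul ESS hdet, Matrix.mul_one]
  set R : Ω → Fin k → ℝ := fun ω i => T ω i - ∑ l, B i l * S ω l with hR
  have hRmem : ∀ i, MemLp (fun ω => R ω i) 2 μ := by
    intro i
    have hsum : MemLp (fun ω => ∑ l, B i l * S ω l) 2 μ := by
      have h0 := memLp_finset_sum' Finset.univ fun l _ => (hS l).const_mul (B i l)
      have he : (fun ω => ∑ l, B i l * S ω l) = ∑ l : Fin d, fun ω => B i l * S ω l := by
        funext ω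
        simp
      rw [he]
      exact h0
    exact (hT i).sub hsum
  have hTS_int : ∀ i j, Integrable (fun ω => T ω i * S ω j) μ :=
    fun i j => l2_mul_integrable (hT i) (hS j)
  have hSS_int : ∀ i j, Integrable (fun ω => S ω i * S ω j) μ :=
    fun i j => l2_mul_integrable (hS i) (hS j)
  have hRS_int : ∀ i l, Integrable (fun ω => R ω i * S ω l) μ :=
    fun i l => l2_mul_integrable (hRmem i) (hS l)
  have hRT_int : ∀ i j, Integrable (fun ω => R ω i * T ω j) μ :=
    fun i j => l2_mul_integrable (hRmem i) (hT j)
  have hRR_int : ∀ i j, Integrable (fun ω => R ω i * R ω j) μ :=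
    fun i j => l2_mul_integrable (hRmem i) (hRmem j)
  have hRS : ∀ i l, ∫ ω, R ω i * S ω l ∂μ = 0 := by
    intro i l
    have he : (fun ω => R ω i * S ω l)
        = fun ω => T ω i * S ω l - ∑ m, B i m * (S ω m * S ω l) := by
      funext ω
      simp only [hR, sub_mul, Finset.sum_mul, mul_assoc]
    rw [he, integral_sub (hTS_int i l)
          (integrable_finset_sum _ fun m _ => ((hSS_int m l).const_mul _)),
        integral_finset_sum _ fun m _ => ((hSS_int m l).const_mul _)]
    simp only [integral_const_mul]
    have h2 := congrFun (congrFun hBESS i) l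
    rw [Matrix.mul_apply] at h2
    simp only [hESS, hETS] at h2 ⊢
    linarith [h2]
  have hRT : ∀ i j, ∫ ω, R ω i * T ω j ∂μ = ETT i j - (B * ETSᵀ) i j := by
    intro i j
    have he : (fun ω => R ω i * T ω j)
        = fun ω => T ω i * T ω j - ∑ m, B i m * (S ω m * T ω j) := by
      funext ω
      simp only [hR, sub_mul, Finset.sum_mul, mul_assoc]
    have hST_int : ∀ m, Integrable (fun ω => S ω m * T ω j) μ :=
      fun m => l2_mul_integrable (hS m) (hT j)
    rw [he, integral_sub (l2_mul_integrable (hT i) (hT j))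
          (integrable_finset_sum _ fun m _ => ((hST_int m).const_mul _)),
        integral_finset_sum _ fun m _ => ((hST_int m).const_mul _)]
    simp only [integral_const_mul]
    rw [Matrix.mul_apply, hETT]
    congr 1
    refine Finset.sum_congr rfl fun m _ => ?_
    congr 1
    rw [Matrix.transpose_apply, hETS]
    exact integral_congr_ae (Filter.Eventually.of_forall fun ω => mul_comm _ _)
  have hRR : ∀ i j, ∫ ω, R ω i * R ω j ∂μ = ETT i j - (B * ETSᵀ) i j := by
    intro i j
    have he : (fun ω => R ω i * R ω j)
        = fun ω => R ω i * T ω j - ∑ l, B j l * (R ω i * S ω l) := by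
      funext ω
      have : R ω j = T ω j - ∑ l, B j l * S ω l := rfl
      rw [this, mul_sub, Finset.mul_sum]
      congr 1
      exact Finset.sum_congr rfl fun l _ => mul_left_comm _ _ _
    rw [he, integral_sub (hRT_int i j)
          (integrable_finset_sum _ fun l _ => ((hRS_int i l).const_mul _)),
        integral_finset_sum _ fun l _ => ((hRS_int i l).const_mul _)]
    simp only [integral_const_mul, hRS, mul_zero, Finset.sum_const_zero, sub_zero]
    exact hRT i j
  constructor
  · intro h
    have hz : ∀ i, ∀ᵐ ω ∂μ, R ω i = 0 := by
      intro i
      have hzero : ∫ ω, R ω i * R ω i ∂μ = 0 := by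
        rw [hRR i i, h]
        ring
      have hnn : 0 ≤ᵐ[μ] fun ω => R ω i * R ω i :=
        Filter.Eventually.of_forall fun ω => mul_self_nonneg _
      have hae := (integral_eq_zero_iff_of_nonneg_ae hnn (hRR_int i i)).mp hzero
      filter_upwards [hae] with ω hω
      exact mul_self_eq_zero.mp hω
    filter_upwards [(MeasureTheory.ae_all_iff).mpr hz] with ω hω
    funext i
    have h1 := hω i
    simp only [hR] at h1
    simp only [Matrix.mulVec, dotProduct]
    linarith [h1]
  · intro h
    have hz : ∀ i, ∀ᵐ ω ∂μ, R ω i = 0 := by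
      intro i
      filter_upwards [h] with ω hω
      simp only [hR]
      have h1 := congrFun hω i
      rw [h1]
      simp [Matrix.mulVec, dotProduct]
    ext i j
    have hzero : ∫ ω, R ω i * R ω j ∂μ = 0 := by
      have hae : (fun ω => R ω i * R ω j) =ᵐ[μ] fun _ => (0 : ℝ) := by
        filter_upwards [hz i] with ω hω
        simp [hω]
      rw [integral_congr_ae hae]
      simp
    have h2 := hRR i j
    rw [hzero] at h2
    linarith [h2]
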